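/- Let ν = (ν_n) and μ = (μ_n) be two smooth sequences of submeasures and let α ∈ (0,1]. Suppose that the ideal Z_ν := {A ⊆ ℕ : limsup_{n→∞} ν_n(A) = 0} is α-thick and that μ is α-flat. Then for every Hausdorff topological space X, every sequence (x_n) in X and every ℓ ∈ X, (x_n) is (Z_ν,μ)-convergent to ℓ if and only if (x_n) is Z_μ-convergent to ℓ (where Z_μ := {A ⊆ ℕ : limsup_{n→∞} μ_n(A) = 0}); equivalently, J(Z_ν,μ) = Z_μ. -/

import Mathlib

open Filter Set Topology

/-- A submeasure on ℕ: a monotone, subadditive map `P(ℕ) → [0,∞]` vanishing on `∅`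
and finite on singletons. -/
structure Submeasure where
  toFun : Set ℕ → ENNReal
  empty' : toFun ∅ = 0
  mono' : ∀ ⦃A B : Set ℕ⦄, A ⊆ B → toFun A ≤ toFun B
  subadd' : ∀ A B : Set ℕ, toFun (A ∪ B) ≤ toFun A + toFun B
  singleton_lt_top' : ∀ n : ℕ, toFun {n} < ⊤

instance : CoeFun Submeasure (fun _ => Set ℕ → ENNReal) :=
  ⟨Submeasure.toFun⟩

/-- A sequence of submeasures is smooth if `μ_n({k}) → 0` for every `k` and
`limsup_n μ_n(ℕ) > 0`. -/
def SmoothSubmeasureSeq (μ : ℕ → Submeasure) : Prop :=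
  (∀ k : ℕ, Tendsto (fun n => μ n {k}) atTop (nhds 0)) ∧
    0 < Filter.limsup (fun n => μ n Set.univ) atTop

/-- A (possibly improper) ideal on ℕ: contains all finite sets, closed under
subsets and finite unions. -/
def IsIdeal (I : Set (Set ℕ)) : Prop :=
  (∀ A : Set ℕ, A.Finite → A ∈ I) ∧
    (∀ ⦃A B : Set ℕ⦄, A ⊆ B → B ∈ I → A ∈ I) ∧
    (∀ ⦃A B : Set ℕ⦄, A ∈ I → B ∈ I → A ∪ B ∈ I)

/-- A proper ideal on ℕ. -/
def IsProperIdeal (I : Set (Set ℕ)) : Prop :=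
  IsIdeal I ∧ (Set.univ : Set ℕ) ∉ I

/-- `J(I,μ) = {A ⊆ ℕ : μ_n(A) →_I 0}`. -/
def JIdeal (I : Set (Set ℕ)) (μ : ℕ → Submeasure) : Set (Set ℕ) :=
  {A : Set ℕ | ∀ ε : ℝ, 0 < ε → {n : ℕ | ENNReal.ofReal ε ≤ μ n A} ∈ I}

/-- `(I,μ)`-convergence of a sequence `x` to `l`. -/
def IMuConv (I : Set (Set ℕ)) (μ : ℕ → Submeasure) {X : Type*} [TopologicalSpace X]
    (x : ℕ → X) (l : X) : Prop :=
  ∀ U ∈ nhds l, ∀ ε : ℝ, 0 < ε →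
    {n : ℕ | ENNReal.ofReal ε ≤ μ n {k : ℕ | x k ∉ U}} ∈ I

/-- `J`-convergence of a sequence `x` to `l`, for a family `J` of subsets of ℕ. -/
def IdealConv (J : Set (Set ℕ)) {X : Type*} [TopologicalSpace X]
    (x : ℕ → X) (l : X) : Prop :=
  ∀ U ∈ nhds l, {n : ℕ | x n ∉ U} ∈ J

/-- `Z_μ = {A ⊆ ℕ : limsup_n μ_n(A) = 0}`. -/
def ZIdeal (μ : ℕ → Submeasure) : Set (Set ℕ) :=
  {A : Set ℕ | Filter.limsup (fun n => μ n A) atTop = 0}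

/-- An ideal (or any family of subsets of ℕ) is `α`-thick if `A ∉ I` whenever there
exist `c > 0` and infinitely many `n` with `ℕ ∩ [n, n + c·n^α] ⊆ A`. -/
def AlphaThick (α : ℝ) (I : Set (Set ℕ)) : Prop :=
  ∀ A : Set ℕ, ∀ c : ℝ, 0 < c →
    {n : ℕ | ∀ m : ℕ, n ≤ m → (m : ℝ) ≤ (n : ℝ) + c * (n : ℝ) ^ α → m ∈ A}.Infinite →
    A ∉ I

/-- A sequence of submeasures is `α`-flat if for each `A ⊆ ℕ` there is `d > 0` with
`|μ_{n+1}(A) − μ_n(A)| ≤ d/n^α` for all `n ≥ 1` (the two-sided inequality in `[0,∞]`). -/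
def AlphaFlat (α : ℝ) (μ : ℕ → Submeasure) : Prop :=
  ∀ A : Set ℕ, ∃ d : ℝ, 0 < d ∧ ∀ n : ℕ, 1 ≤ n →
    μ (n + 1) A ≤ μ n A + ENNReal.ofReal (d / (n : ℝ) ^ α) ∧
    μ n A ≤ μ (n + 1) A + ENNReal.ofReal (d / (n : ℝ) ^ α)

lemma mem_ZIdeal_iff_tendsto (μ : ℕ → Submeasure) (A : Set ℕ) :
    A ∈ ZIdeal μ ↔ Tendsto (fun n => μ n A) atTop (nhds 0) := by
  constructor
  · intro h
    rw [ENNReal.tendsto_nhds_zero]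
    intro ε hε
    rcases eq_or_ne ε ⊤ with rfl | hne
    · exact Eventually.of_forall fun _ => le_top
    · have : Filter.limsup (fun n => μ n A) atTop < ε := by
        rw [ZIdeal, mem_setOf_eq] at h
        rw [h]; exact pos_iff_ne_zero.mpr (by exact fun h0 => by simp [h0] at hε)
      exact (Filter.eventually_lt_of_limsup_lt this).mono fun n hn => hn.le
  · intro h
    exact h.limsup_eq

lemma finite_mem_ZIdeal (ν : ℕ → Submeasure)
    (hν : ∀ k : ℕ, Tendsto (fun n => ν n {k}) atTop (nhds 0)) (A : Set ℕ) (hA : A.Finite) :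
    A ∈ ZIdeal ν := by
  rw [mem_ZIdeal_iff_tendsto]
  refine Set.Finite.induction_on _ hA ?_ ?_
  · simpa [Submeasure.empty'] using tendsto_const_nhds
  · intro a s _ _ ih
    have hb : Tendsto (fun n => ν n {a} + ν n s) atTop (nhds 0) := by
      simpa using (hν a).add ih
    refine tendsto_of_tendsto_of_tendsto_of_le_of_le tendsto_const_nhds hb
      (fun n => zero_le) (fun n => ?_)
    calc ν n (insert a s) = ν n ({a} ∪ s) := by rw [Set.singleton_union]
    _ ≤ ν n {a} + ν n s := (ν n).subadd' _ _

lemma chain_bound (μ : ℕ → Submeasure) (A : Set ℕ) (α d : ℝ) (hα0 : 0 < α) (hd : 0 < d)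
    (hflat : ∀ n : ℕ, 1 ≤ n → μ n A ≤ μ (n + 1) A + ENNReal.ofReal (d / (n : ℝ) ^ α))
    (n : ℕ) (hn : 1 ≤ n) :
    ∀ j : ℕ, μ n A ≤ μ (n + j) A + ENNReal.ofReal (j * (d / (n : ℝ) ^ α)) := by
  have hnpos : (0 : ℝ) < (n : ℝ) := by exact_mod_cast hn
  have hq : 0 ≤ d / (n : ℝ) ^ α := le_of_lt (div_pos hd (Real.rpow_pos_of_pos hnpos α))
  intro j
  induction j with
  | zero => simp
  | succ j ih =>
    have h1 : μ (n + j) A ≤ μ (n + j + 1) A + ENNReal.ofReal (d / (n : ℝ) ^ α) := by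
      have step := hflat (n + j) (le_trans hn (Nat.le_add_right n j))
      refine step.trans (add_le_add_right (ENNReal.ofReal_le_ofReal ?_) _)
      have hmono : (n : ℝ) ^ α ≤ ((n + j : ℕ) : ℝ) ^ α :=
        Real.rpow_le_rpow hnpos.le (by exact_mod_cast Nat.le_add_right n j) hα0.le
      exact div_le_div_of_nonneg_left hd.le (Real.rpow_pos_of_pos hnpos α) hmono
    calc μ n A ≤ μ (n + j) A + ENNReal.ofReal (j * (d / (n : ℝ) ^ α)) := ih
      _ ≤ (μ (n + j + 1) A + ENNReal.ofReal (d / (n : ℝ) ^ α)) +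
          ENNReal.ofReal (j * (d / (n : ℝ) ^ α)) := add_le_add_left h1 _
      _ = μ (n + (j + 1)) A + ENNReal.ofReal ((j + 1 : ℕ) * (d / (n : ℝ) ^ α)) := by
          rw [add_assoc, ← ENNReal.ofReal_add hq (by positivity)]
          have : d / (n : ℝ) ^ α + (j : ℝ) * (d / (n : ℝ) ^ α)
              = ((j + 1 : ℕ) : ℝ) * (d / (n : ℝ) ^ α) := by push_cast; ring
          rw [this, add_assoc n j 1]

lemma J_eq_Z (ν μ : ℕ → Submeasure)
    (hν1 : ∀ k : ℕ, Tendsto (fun n => ν n {k}) atTop (nhds 0))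
    (α : ℝ) (hα0 : 0 < α)
    (hthick : AlphaThick α (ZIdeal ν)) (hflat : AlphaFlat α μ) :
    JIdeal (ZIdeal ν) μ = ZIdeal μ := by
  ext A
  constructor
  · intro hA
    by_contra hZ
    have hL : 0 < Filter.limsup (fun n => μ n A) atTop := pos_iff_ne_zero.mpr hZ
    obtain ⟨a, ha0, haL⟩ := exists_between hL
    have hat : a ≠ ⊤ := (lt_of_lt_of_le haL le_top).ne
    set ε : ℝ := a.toReal / 2 with hεdef
    have hε : 0 < ε := by
      have := ENNReal.toReal_pos ha0.ne' hat
      positivity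
    have hofa : ENNReal.ofReal ε + ENNReal.ofReal ε = a := by
      rw [← ENNReal.ofReal_add hε.le hε.le]
      have : ε + ε = a.toReal := by rw [hεdef]; ring
      rw [this, ENNReal.ofReal_toReal hat]
    obtain ⟨d, hd, hflatA⟩ := hflat A
    set c : ℝ := ε / d with hcdef
    have hc : 0 < c := div_pos hε hd
    set B : Set ℕ := {n : ℕ | ENNReal.ofReal ε ≤ μ n A} with hBdef
    have hfreq : ∀ N : ℕ, ∃ n, N ≤ n ∧ a ≤ μ n A := by
      intro N
      by_contra h
      push_neg at h
      have hev : ∀ᶠ n in atTop, (fun n => μ n A) n ≤ a :=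
        eventually_atTop.mpr ⟨N, fun n hn => (h n hn).le⟩
      exact absurd (Filter.limsup_le_of_le (by isBoundedDefault) hev) (not_le.mpr haL)
    have hTsub : {n : ℕ | 1 ≤ n ∧ a ≤ μ n A} ⊆
        {n : ℕ | ∀ m : ℕ, n ≤ m → (m : ℝ) ≤ (n : ℝ) + c * (n : ℝ) ^ α → m ∈ B} := by
      rintro n ⟨hn1, hna⟩ m hnm hmle
      have hnpos : (0 : ℝ) < (n : ℝ) := by exact_mod_cast hn1
      have hnα : (0 : ℝ) < (n : ℝ) ^ α := Real.rpow_pos_of_pos hnpos α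
      obtain ⟨j, rfl⟩ := Nat.exists_eq_add_of_le hnm
      have hchain := chain_bound μ A α d hα0 hd (fun k hk => (hflatA k hk).2) n hn1 j
      have hjle : (j : ℝ) * (d / (n : ℝ) ^ α) ≤ ε := by
        have hj : (j : ℝ) ≤ c * (n : ℝ) ^ α := by
          have : ((n + j : ℕ) : ℝ) = (n : ℝ) + (j : ℝ) := by push_cast; ring
          linarith [hmle, this ▸ hmle]
        calc (j : ℝ) * (d / (n : ℝ) ^ α) ≤ c * (n : ℝ) ^ α * (d / (n : ℝ) ^ α) :=
              mul_le_mul_of_nonneg_right hj (by positivity)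
          _ = c * d := by field_simp
          _ = ε := by rw [hcdef]; field_simp
      have h2 : a ≤ μ (n + j) A + ENNReal.ofReal ε := by
        calc a ≤ μ n A := hna
          _ ≤ μ (n + j) A + ENNReal.ofReal ((j : ℝ) * (d / (n : ℝ) ^ α)) := hchain
          _ ≤ μ (n + j) A + ENNReal.ofReal ε :=
              add_le_add_right (ENNReal.ofReal_le_ofReal hjle) _
      rw [← hofa] at h2
      exact (ENNReal.add_le_add_iff_right ENNReal.ofReal_ne_top).mp h2
    have hTinf : {n : ℕ | 1 ≤ n ∧ a ≤ μ n A}.Infinite := by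
      apply Set.infinite_of_not_bddAbove
      rintro ⟨N, hN⟩
      obtain ⟨n, hn1, hna⟩ := hfreq (N + 1)
      exact absurd (hN ⟨le_trans (by omega) hn1, hna⟩) (by omega)
    exact absurd (hA ε hε) (hthick B c hc (hTinf.mono hTsub))
  · intro hA ε hε
    have ht := (mem_ZIdeal_iff_tendsto μ A).mp hA
    have hev : ∀ᶠ n in atTop, (fun n => μ n A) n < ENNReal.ofReal ε :=
      ht.eventually_lt_const (ENNReal.ofReal_pos.mpr hε)
    obtain ⟨N, hN⟩ := eventually_atTop.mp hev
    refine finite_mem_ZIdeal ν hν1 _ (Set.Finite.subset (Set.finite_Iio N) ?_)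
    intro n hn
    by_contra h
    exact absurd (hN n (by simpa using h)) (not_lt.mpr hn)

/-- if `Z_ν` is `α`-thick and `μ` is `α`-flat for some `α ∈ (0,1]`, then
`(Z_ν,μ)`-convergence coincides with `Z_μ`-convergence, and `J(Z_ν,μ) = Z_μ`. -/
theorem stmt_6 (ν μ : ℕ → Submeasure) (hν : SmoothSubmeasureSeq ν) (hμ : SmoothSubmeasureSeq μ)
    (α : ℝ) (hα0 : 0 < α) (hα1 : α ≤ 1)
    (hthick : AlphaThick α (ZIdeal ν)) (hflat : AlphaFlat α μ) :
    (∀ (X : Type*) [TopologicalSpace X] [T2Space X] (x : ℕ → X) (l : X),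
        IMuConv (ZIdeal ν) μ x l ↔ IdealConv (ZIdeal μ) x l) ∧
      JIdeal (ZIdeal ν) μ = ZIdeal μ := by
  have hJ : JIdeal (ZIdeal ν) μ = ZIdeal μ := J_eq_Z ν μ hν.1 α hα0 hthick hflat
  refine ⟨?_, hJ⟩
  intro X _ _ x l
  constructor
  · intro h U hU
    have hm : {k : ℕ | x k ∉ U} ∈ JIdeal (ZIdeal ν) μ := fun ε hε => h U hU ε hε
    rw [hJ] at hm
    exact hm
  · intro h U hU ε hε
    have hm := h U hU
    rw [← hJ] at hm
    exact hm ε hε
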